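/- arXiv:quant-ph/0408159 — 3 statements merged into one kernel-verified Lean document; each statement's English description precedes it below -/
import Mathlib

section
/- Let R and S be positive semidefinite operators on a finite-dimensional complex Hilbert space H. Then sup { Tr(X†Y + Y†X) : X, Y ∈ B(H), X†X = R, Y†Y = S } = 2 Tr[(R^{1/2} S R^{1/2})^{1/2}]. -/
set_option maxHeartbeats 1000000

open Matrix
open scoped ComplexOrder Classical

noncomputable def msqrt {ι : Type*} [Fintype ι] [DecidableEq ι]
    (A : Matrix ι ι ℂ) : Matrix ι ι ℂ :=
  if h : A.PosSemidef then
    (h.1.eigenvectorUnitary : Matrix ι ι ℂ) *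
      diagonal ((↑) ∘ Real.sqrt ∘ h.1.eigenvalues) *
      (star h.1.eigenvectorUnitary : Matrix ι ι ℂ)
  else 0

noncomputable def traceNorm {ι : Type*} [Fintype ι] [DecidableEq ι]
    (A : Matrix ι ι ℂ) : ℝ :=
  ((msqrt (Aᴴ * A)).trace).re

noncomputable def uFid {ι : Type*} [Fintype ι] [DecidableEq ι]
    (ρ σ : Matrix ι ι ℂ) : ℝ :=
  ((msqrt (msqrt ρ * σ * msqrt ρ)).trace).re

def IsDensity {ι : Type*} [Fintype ι] (ρ : Matrix ι ι ℂ) : Prop :=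
  ρ.PosSemidef ∧ ρ.trace = 1

section Aux

open scoped InnerProductSpace

variable {n : ℕ}

noncomputable def Matrix.PosSemidef.sqrt {ι : Type*} [Fintype ι] [DecidableEq ι]
    {A : Matrix ι ι ℂ} (h : A.PosSemidef) : Matrix ι ι ℂ :=
  (h.1.eigenvectorUnitary : Matrix ι ι ℂ) *
      diagonal ((↑) ∘ Real.sqrt ∘ h.1.eigenvalues) *
      (star h.1.eigenvectorUnitary : Matrix ι ι ℂ)

lemma Matrix.PosSemidef.posSemidef_sqrt {ι : Type*} [Fintype ι] [DecidableEq ι]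
    {A : Matrix ι ι ℂ} (h : A.PosSemidef) : h.sqrt.PosSemidef := by
  unfold Matrix.PosSemidef.sqrt
  have hD : (diagonal ((↑) ∘ Real.sqrt ∘ h.1.eigenvalues) : Matrix ι ι ℂ).PosSemidef := by
    rw [posSemidef_diagonal_iff]
    intro i
    simp [Real.sqrt_nonneg]
  exact hD.mul_mul_conjTranspose_same _

lemma Matrix.PosSemidef.sqrt_mul_self {ι : Type*} [Fintype ι] [DecidableEq ι]
    {A : Matrix ι ι ℂ} (h : A.PosSemidef) : h.sqrt * h.sqrt = A := by
  unfold Matrix.PosSemidef.sqrt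
  have hU : (star h.1.eigenvectorUnitary : Matrix ι ι ℂ) * (h.1.eigenvectorUnitary : Matrix ι ι ℂ) = 1 :=
    Unitary.star_mul_self_of_mem (h.1.eigenvectorUnitary).2
  have hDD : (diagonal ((↑) ∘ Real.sqrt ∘ h.1.eigenvalues) : Matrix ι ι ℂ) *
      diagonal ((↑) ∘ Real.sqrt ∘ h.1.eigenvalues) = diagonal (RCLike.ofReal ∘ h.1.eigenvalues) := by
    rw [diagonal_mul_diagonal]
    congr 1; funext i
    simp only [Function.comp_apply]
    rw [← Complex.ofReal_mul, Real.mul_self_sqrt (h.eigenvalues_nonneg i)]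
    rfl
  conv_rhs => rw [h.1.spectral_theorem, Unitary.conjStarAlgAut_apply]
  calc _ = (h.1.eigenvectorUnitary : Matrix ι ι ℂ) * (diagonal ((↑) ∘ Real.sqrt ∘ h.1.eigenvalues) *
      ((star h.1.eigenvectorUnitary : Matrix ι ι ℂ) * (h.1.eigenvectorUnitary : Matrix ι ι ℂ)) *
      diagonal ((↑) ∘ Real.sqrt ∘ h.1.eigenvalues)) * (star h.1.eigenvectorUnitary : Matrix ι ι ℂ) := by
        simp only [mul_assoc]
    _ = _ := by rw [hU, mul_one, hDD]

lemma msqrt_of_posSemidef {ι : Type*} [Fintype ι] [DecidableEq ι]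
    {A : Matrix ι ι ℂ} (hA : A.PosSemidef) : msqrt A = hA.sqrt := dif_pos hA

lemma sqrt_congr {ι : Type*} [Fintype ι] [DecidableEq ι] {A B : Matrix ι ι ℂ} (h : A = B)
    (hA : A.PosSemidef) (hB : B.PosSemidef) : hA.sqrt = hB.sqrt := by
  subst h; rfl

lemma toEuclideanLin_mul (M N : Matrix (Fin n) (Fin n) ℂ) :
    Matrix.toEuclideanLin (M * N)
      = (Matrix.toEuclideanLin M).comp (Matrix.toEuclideanLin N) := by
  apply LinearMap.ext; intro x
  simp [Matrix.toEuclideanLin_apply, Matrix.mulVec_mulVec]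

lemma toEuclideanLin_one :
    Matrix.toEuclideanLin (1 : Matrix (Fin n) (Fin n) ℂ) = LinearMap.id := by
  apply LinearMap.ext; intro x
  simp [Matrix.toEuclideanLin_apply, Matrix.one_mulVec]

/-- Polar decomposition for square complex matrices. -/
lemma polar (A : Matrix (Fin n) (Fin n) ℂ) :
    ∃ U : Matrix (Fin n) (Fin n) ℂ, Uᴴ * U = 1 ∧ U * Uᴴ = 1 ∧
      A = U * (Matrix.posSemidef_conjTranspose_mul_self A).sqrt := by
  set P := (Matrix.posSemidef_conjTranspose_mul_self A).sqrt with hPdef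
  have hP : P.PosSemidef := Matrix.PosSemidef.posSemidef_sqrt _
  have hPP : P * P = Aᴴ * A := Matrix.PosSemidef.sqrt_mul_self _
  have hPH : Pᴴ = P := hP.1
  set g := Matrix.toEuclideanLin P with hg
  set f := Matrix.toEuclideanLin A with hf
  have hinner : ∀ x : EuclideanSpace ℂ (Fin n), ⟪g x, g x⟫_ℂ = ⟪f x, f x⟫_ℂ := by
    intro x
    have h1 : ⟪x, Matrix.toEuclideanLin (Pᴴ * P) x⟫_ℂ = ⟪g x, g x⟫_ℂ := by
      rw [toEuclideanLin_mul, LinearMap.comp_apply,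
        Matrix.toEuclideanLin_conjTranspose_eq_adjoint, LinearMap.adjoint_inner_right]
    have h2 : ⟪x, Matrix.toEuclideanLin (Aᴴ * A) x⟫_ℂ = ⟪f x, f x⟫_ℂ := by
      rw [toEuclideanLin_mul, LinearMap.comp_apply,
        Matrix.toEuclideanLin_conjTranspose_eq_adjoint, LinearMap.adjoint_inner_right]
    rw [← h1, ← h2, hPH, hPP]
  have hnorm : ∀ x, ‖g x‖ = ‖f x‖ := by
    intro x
    have h1 := InnerProductSpace.norm_sq_eq_re_inner (𝕜 := ℂ) (g x)
    have h2 := InnerProductSpace.norm_sq_eq_re_inner (𝕜 := ℂ) (f x)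
    have h3 : ‖g x‖ ^ 2 = ‖f x‖ ^ 2 := by rw [h1, h2, hinner]
    exact (pow_left_inj₀ (norm_nonneg _) (norm_nonneg _) two_ne_zero).mp h3
  have hker : LinearMap.ker g ≤ LinearMap.ker f := by
    intro x hx
    rw [LinearMap.mem_ker] at hx ⊢
    have h := hnorm x
    rw [hx, norm_zero] at h
    exact norm_eq_zero.mp h.symm
  set ℓ : (LinearMap.range g) →ₗ[ℂ] EuclideanSpace ℂ (Fin n) :=
    ((LinearMap.ker g).liftQ f hker).comp g.quotKerEquivRange.symm.toLinearMap with hldef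
  have hℓ : ∀ x, ℓ ⟨g x, LinearMap.mem_range_self g x⟩ = f x := by
    intro x
    rw [hldef]
    simp only [LinearMap.comp_apply, LinearEquiv.coe_coe]
    rw [LinearMap.quotKerEquivRange_symm_apply_image]
    simp
  have hnormℓ : ∀ s : LinearMap.range g, ‖ℓ s‖ = ‖s‖ := by
    rintro ⟨-, x, rfl⟩
    rw [hℓ x, ← hnorm x]
    rfl
  set L : (LinearMap.range g) →ₗᵢ[ℂ] EuclideanSpace ℂ (Fin n) := ⟨ℓ, hnormℓ⟩ with hLdef
  set W := L.extend with hWdef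
  have hWg : ∀ x, W (g x) = f x := by
    intro x
    have h := L.extend_apply ⟨g x, LinearMap.mem_range_self g x⟩
    rw [← hWdef] at h
    rw [show L ⟨g x, LinearMap.mem_range_self g x⟩ = f x from hℓ x] at h
    exact h
  set U := Matrix.toEuclideanLin.symm (W.toLinearMap) with hU
  have hUW : Matrix.toEuclideanLin U = W.toLinearMap :=
    Matrix.toEuclideanLin.apply_symm_apply _
  have hUunit : Uᴴ * U = 1 := by
    apply Matrix.toEuclideanLin.injective
    rw [toEuclideanLin_mul, Matrix.toEuclideanLin_conjTranspose_eq_adjoint, hUW,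
      toEuclideanLin_one]
    apply LinearMap.ext; intro x
    apply ext_inner_left ℂ
    intro y
    rw [LinearMap.comp_apply, LinearMap.adjoint_inner_right]
    simpa using W.inner_map_map y x
  refine ⟨U, hUunit, mul_eq_one_comm.mp hUunit, ?_⟩
  apply Matrix.toEuclideanLin.injective
  rw [toEuclideanLin_mul, hUW]
  apply LinearMap.ext; intro x
  exact (hWg x).symm

/-- Real trace bound: for `G` with `Gᴴ * G = 1` and `N` PSD, `Re Tr(G N) ≤ Re Tr N`. -/
lemma re_trace_mul_le (G N : Matrix (Fin n) (Fin n) ℂ) (hG : Gᴴ * G = 1)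
    (hN : N.PosSemidef) : ((G * N).trace).re ≤ (N.trace).re := by
  have hH := hN.1
  set V : Matrix (Fin n) (Fin n) ℂ := (Matrix.IsHermitian.eigenvectorUnitary hH :
    Matrix (Fin n) (Fin n) ℂ) with hVdef
  have hVmem := (Matrix.IsHermitian.eigenvectorUnitary hH).2
  have hV1 : Vᴴ * V = 1 := Unitary.star_mul_self_of_mem hVmem
  have hV2 : V * Vᴴ = 1 := Unitary.mul_star_self_of_mem hVmem
  set d : Fin n → ℝ := hH.eigenvalues with hddef
  have hspec : N = V * Matrix.diagonal (RCLike.ofReal ∘ d) * Vᴴ := by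
    conv_lhs => rw [hH.spectral_theorem, Unitary.conjStarAlgAut_apply]
    rfl
  set M := Vᴴ * G * V with hMdef
  have hM : Mᴴ * M = 1 := by
    have hMH : Mᴴ = Vᴴ * Gᴴ * V := by
      rw [hMdef]
      simp [conjTranspose_mul, mul_assoc]
    rw [hMH, hMdef]
    calc Vᴴ * Gᴴ * V * (Vᴴ * G * V)
        = Vᴴ * Gᴴ * (V * Vᴴ) * (G * V) := by noncomm_ring
      _ = Vᴴ * (Gᴴ * G) * V := by rw [hV2]; noncomm_ring
      _ = 1 := by rw [hG, mul_one, hV1]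
  have habs : ∀ i, ‖M i i‖ ≤ 1 := by
    intro i
    have h1 : (Mᴴ * M) i i = 1 := by rw [hM]; simp
    have h2 : (Mᴴ * M) i i = ∑ k, ((Complex.normSq (M k i) : ℝ) : ℂ) := by
      simp only [Matrix.mul_apply, Matrix.conjTranspose_apply]
      exact Finset.sum_congr rfl fun k _ => by
        simp [Complex.normSq_eq_conj_mul_self]
    have h3 : ∑ k, Complex.normSq (M k i) = 1 := by
      have h := congrArg Complex.re (h2.symm.trans h1)
      simpa [Complex.re_sum] using h
    have h4 : Complex.normSq (M i i) ≤ 1 := by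
      rw [← h3]
      exact Finset.single_le_sum (f := fun k => Complex.normSq (M k i)) (fun k _ => Complex.normSq_nonneg _) (Finset.mem_univ i)
    have h5 : ‖M i i‖ ^ 2 ≤ 1 := by
      rw [Complex.sq_norm]; exact h4
    nlinarith [norm_nonneg (M i i)]
  have htr1 : (G * N).trace = ∑ i, M i i * ((d i : ℝ) : ℂ) := by
    conv_lhs => rw [hspec]
    have e1 : G * (V * Matrix.diagonal (RCLike.ofReal ∘ d) * Vᴴ)
        = (G * V * Matrix.diagonal (RCLike.ofReal ∘ d)) * Vᴴ := by noncomm_ring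
    have e2 : Vᴴ * (G * V * Matrix.diagonal (RCLike.ofReal ∘ d))
        = M * Matrix.diagonal (RCLike.ofReal ∘ d) := by
      rw [hMdef]; noncomm_ring
    rw [e1, Matrix.trace_mul_comm, e2]
    simp [Matrix.trace, Matrix.diag, Matrix.mul_diagonal]
  have htr2 : N.trace = ∑ i, ((d i : ℝ) : ℂ) := by
    conv_lhs => rw [hspec]
    rw [Matrix.trace_mul_comm, ← mul_assoc, hV1, one_mul]
    simp [Matrix.trace, Matrix.diag]
  rw [htr1, htr2, Complex.re_sum, Complex.re_sum]
  apply Finset.sum_le_sum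
  intro i _
  have hd : 0 ≤ d i := hN.eigenvalues_nonneg i
  have h6 : (M i i * ((d i : ℝ) : ℂ)).re = (M i i).re * d i := by
    simp [Complex.mul_re]
  have h7 : (((d i : ℝ) : ℂ)).re = d i := by simp
  rw [h6, h7]
  have h8 : (M i i).re ≤ 1 := le_trans (Complex.re_le_norm _) (habs i)
  nlinarith

lemma re_trace_symm (X Y : Matrix (Fin n) (Fin n) ℂ) :
    ((Xᴴ * Y + Yᴴ * X).trace).re = 2 * ((Xᴴ * Y).trace).re := by
  have h : Yᴴ * X = (Xᴴ * Y)ᴴ := by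
    rw [conjTranspose_mul, conjTranspose_conjTranspose]
  rw [Matrix.trace_add, h, Matrix.trace_conjTranspose, Complex.add_re]
  simp [Complex.star_def]
  ring

end Aux

/-- Lemma 1: sup over `X†X = R`, `Y†Y = S` of `Tr(X†Y + Y†X)` equals
`2 Tr[(R^{1/2} S R^{1/2})^{1/2}]`, and the sup is attained. -/
theorem stmt1 {n : ℕ} (R S : Matrix (Fin n) (Fin n) ℂ)
    (hR : R.PosSemidef) (hS : S.PosSemidef) :
    IsGreatest
      {t : ℝ | ∃ X Y : Matrix (Fin n) (Fin n) ℂ,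
        Xᴴ * X = R ∧ Yᴴ * Y = S ∧ t = ((Xᴴ * Y + Yᴴ * X).trace).re}
      (2 * ((msqrt (msqrt R * S * msqrt R)).trace).re) := by
  set sR := msqrt R with hsRdef
  set sS := msqrt S with hsSdef
  have hsR : sR = hR.sqrt := msqrt_of_posSemidef hR
  have hsS : sS = hS.sqrt := msqrt_of_posSemidef hS
  have hsRps : sR.PosSemidef := hsR ▸ hR.posSemidef_sqrt
  have hsSps : sS.PosSemidef := hsS ▸ hS.posSemidef_sqrt
  have hsRH : sRᴴ = sR := hsRps.1
  have hsSH : sSᴴ = sS := hsSps.1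
  have hsRmul : sR * sR = R := by rw [hsR]; exact hR.sqrt_mul_self
  have hsSmul : sS * sS = S := by rw [hsS]; exact hS.sqrt_mul_self
  set A := sS * sR with hAdef
  have hAA : Aᴴ * A = sR * S * sR := by
    rw [hAdef, conjTranspose_mul, hsRH, hsSH]
    calc sR * sS * (sS * sR) = sR * (sS * sS) * sR := by noncomm_ring
      _ = sR * S * sR := by rw [hsSmul]
  have hsand : (sR * S * sR).PosSemidef := hAA ▸ Matrix.posSemidef_conjTranspose_mul_self A
  set N := msqrt (sR * S * sR) with hNdef
  have hN : N = (Matrix.posSemidef_conjTranspose_mul_self A).sqrt := by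
    rw [hNdef, msqrt_of_posSemidef hsand]
    exact sqrt_congr hAA.symm hsand (Matrix.posSemidef_conjTranspose_mul_self A)
  have hNps : N.PosSemidef := by
    rw [hN]; exact Matrix.PosSemidef.posSemidef_sqrt _
  obtain ⟨UA, hUA1, hUA2, hUA3⟩ := polar A
  rw [← hN] at hUA3
  constructor
  · -- attainment
    refine ⟨sR, UAᴴ * sS, ?_, ?_, ?_⟩
    · rw [hsRH, hsRmul]
    · rw [conjTranspose_mul, conjTranspose_conjTranspose, hsSH]
      calc sS * UA * (UAᴴ * sS) = sS * (UA * UAᴴ) * sS := by noncomm_ring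
        _ = S := by rw [hUA2, mul_one, hsSmul]
    · rw [re_trace_symm]
      have key : (sRᴴ * (UAᴴ * sS)).trace = N.trace := by
        rw [hsRH, Matrix.trace_mul_comm]
        have e2 : UAᴴ * sS * sR = UAᴴ * (UA * N) := by
          rw [mul_assoc, ← hAdef, hUA3]
        rw [e2, ← mul_assoc, hUA1, one_mul]
      rw [key]
  · -- upper bound
    rintro t ⟨X, Y, hX, hY, rfl⟩
    rw [re_trace_symm]
    obtain ⟨UX, hUX1, hUX2, hX3⟩ := polar X
    obtain ⟨UY, hUY1, hUY2, hY3⟩ := polar Y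
    have hPX : (Matrix.posSemidef_conjTranspose_mul_self X).sqrt = sR := by
      rw [sqrt_congr hX (Matrix.posSemidef_conjTranspose_mul_self X) hR, hsR]
    have hPY : (Matrix.posSemidef_conjTranspose_mul_self Y).sqrt = sS := by
      rw [sqrt_congr hY (Matrix.posSemidef_conjTranspose_mul_self Y) hS, hsS]
    rw [hPX] at hX3
    rw [hPY] at hY3
    have key : (Xᴴ * Y).trace = ((UXᴴ * UY * UA) * N).trace := by
      rw [hX3, hY3]
      have e1 : (UX * sR)ᴴ * (UY * sS) = sR * UXᴴ * UY * sS := by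
        rw [conjTranspose_mul, hsRH]; noncomm_ring
      rw [e1, Matrix.trace_mul_comm]
      have e2 : sS * (sR * UXᴴ * UY) = UA * N * (UXᴴ * UY) := by
        calc sS * (sR * UXᴴ * UY) = (sS * sR) * (UXᴴ * UY) := by noncomm_ring
          _ = UA * N * (UXᴴ * UY) := by rw [← hAdef, hUA3]
      rw [e2, Matrix.trace_mul_comm]
      congr 1
      noncomm_ring
    rw [key]
    have hGU : (UXᴴ * UY * UA)ᴴ * (UXᴴ * UY * UA) = 1 := by
      have e3 : (UXᴴ * UY * UA)ᴴ = UAᴴ * (UYᴴ * UX) := by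
        simp [conjTranspose_mul, mul_assoc]
      rw [e3]
      calc UAᴴ * (UYᴴ * UX) * (UXᴴ * UY * UA)
          = UAᴴ * UYᴴ * (UX * UXᴴ) * (UY * UA) := by noncomm_ring
        _ = UAᴴ * (UYᴴ * UY) * UA := by rw [hUX2]; noncomm_ring
        _ = 1 := by rw [hUY1, mul_one, hUA1]
    have := re_trace_mul_le (UXᴴ * UY * UA) N hGU hNps
    linarith
end

section
/- Let Φ, Ψ be unital completely positive maps (quantum channels) on B(ℂⁿ) implemented by unitaries U, V, i.e. Φ(B) = U†BU and Ψ(B) = V†BV. Then the minimax fidelity f(Φ,Ψ) = inf_ρ |Tr(ρ U†V)|, over density operators ρ, equals dist(0, co(Sp(U†V))), the distance from the origin to the convex hull of the spectrum of W = U†V. -/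
open Matrix
open scoped ComplexOrder Classical

-- find a unimodular non-eigenvalue
lemma exists_unimodular_not_mem_spectrum {n : ℕ} (W : Matrix (Fin n) (Fin n) ℂ) :
    ∃ μ : ℂ, star μ * μ = 1 ∧ μ ∉ spectrum ℂ W := by
  have hinj : Function.Injective (fun t : ℝ => (1 + t*Complex.I)/(1 - t*Complex.I)) := by
    intro s t h
    have hs : (1 : ℂ) - s*Complex.I ≠ 0 := by
      intro hc
      have := congrArg Complex.re hc
      simp at this
    have ht : (1 : ℂ) - t*Complex.I ≠ 0 := by
      intro hc
      have := congrArg Complex.re hc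
      simp at this
    rw [div_eq_div_iff hs ht] at h
    have h2 : (s : ℂ) = t := by linear_combination (-Complex.I/2) * h + ((s:ℂ) - t) * Complex.I_sq
    exact_mod_cast h2
  have hfin := W.finite_spectrum
  have hnotsub : ¬ Set.range (fun t : ℝ => (1 + t*Complex.I)/(1 - t*Complex.I)) ⊆ spectrum ℂ W := by
    intro hsub
    exact (Set.infinite_range_of_injective hinj) (hfin.subset hsub)
  obtain ⟨μ, ⟨t, rfl⟩, hμ⟩ := Set.not_subset.mp hnotsub
  refine ⟨_, ?_, hμ⟩
  have ht : (1 : ℂ) - t*Complex.I ≠ 0 := by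
    intro hc
    have := congrArg Complex.re hc
    simp at this
  have ht' : (1 : ℂ) + t*Complex.I ≠ 0 := by
    intro hc
    have := congrArg Complex.re hc
    simp at this
  rw [star_div₀]
  rw [show star ((1:ℂ) + t*Complex.I) = 1 - t*Complex.I by
    simp [Complex.star_def, _root_.map_mul, Complex.conj_I, Complex.conj_ofReal]; ring,
    show star ((1:ℂ) - t*Complex.I) = 1 + t*Complex.I by
    simp [Complex.star_def, _root_.map_mul, Complex.conj_I, Complex.conj_ofReal]]
  field_simp

section conjD
variable {n : ℕ} (u : Matrix.unitaryGroup (Fin n) ℂ)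

noncomputable def conjD (f : Fin n → ℂ) : Matrix (Fin n) (Fin n) ℂ :=
  (u : Matrix (Fin n) (Fin n) ℂ) * diagonal f * star (u : Matrix (Fin n) (Fin n) ℂ)

lemma u_star_mul : star (u : Matrix (Fin n) (Fin n) ℂ) * (u : Matrix (Fin n) (Fin n) ℂ) = 1 :=
  (Unitary.mem_iff.mp u.2).1

lemma u_mul_star : (u : Matrix (Fin n) (Fin n) ℂ) * star (u : Matrix (Fin n) (Fin n) ℂ) = 1 :=
  (Unitary.mem_iff.mp u.2).2

lemma conjD_mul (f g : Fin n → ℂ) : conjD u f * conjD u g = conjD u (fun j => f j * g j) := by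
  unfold conjD
  rw [← diagonal_mul_diagonal f g]
  calc (u : Matrix (Fin n) (Fin n) ℂ) * diagonal f * star (u : Matrix (Fin n) (Fin n) ℂ) *
        ((u : Matrix (Fin n) (Fin n) ℂ) * diagonal g * star (u : Matrix (Fin n) (Fin n) ℂ))
      = (u : Matrix (Fin n) (Fin n) ℂ) * diagonal f *
        ((star (u : Matrix (Fin n) (Fin n) ℂ) * (u : Matrix (Fin n) (Fin n) ℂ)) *
          (diagonal g * star (u : Matrix (Fin n) (Fin n) ℂ))) := by
        simp only [Matrix.mul_assoc]
    _ = (u : Matrix (Fin n) (Fin n) ℂ) * (diagonal f * diagonal g) * star (u : Matrix (Fin n) (Fin n) ℂ) := by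
        rw [u_star_mul, one_mul]; simp only [Matrix.mul_assoc]

lemma conjD_const (c : ℂ) : conjD u (fun _ => c) = c • (1 : Matrix (Fin n) (Fin n) ℂ) := by
  unfold conjD
  have h : (diagonal (fun _ => c) : Matrix (Fin n) (Fin n) ℂ) = c • 1 := by
    have h2 : (fun _ : Fin n => c) = c • (fun _ : Fin n => (1:ℂ)) := by funext x; simp
    rw [h2, diagonal_smul, diagonal_one]
  rw [h, Matrix.mul_smul, Matrix.smul_mul, Matrix.mul_one, u_mul_star]

lemma conjD_smul (c : ℂ) (f : Fin n → ℂ) : conjD u (fun j => c * f j) = c • conjD u f := by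
  unfold conjD
  rw [show (fun j => c * f j) = c • f from rfl, diagonal_smul, Matrix.mul_smul, Matrix.smul_mul]

lemma conjD_add (f g : Fin n → ℂ) : conjD u (fun j => f j + g j) = conjD u f + conjD u g := by
  unfold conjD
  rw [show (diagonal fun j => f j + g j : Matrix (Fin n) (Fin n) ℂ) = diagonal f + diagonal g from
    (diagonal_add f g).symm, Matrix.mul_add, Matrix.add_mul]

lemma conjD_sub (f g : Fin n → ℂ) : conjD u (fun j => f j - g j) = conjD u f - conjD u g := by
  unfold conjD
  rw [show (diagonal fun j => f j - g j : Matrix (Fin n) (Fin n) ℂ) = diagonal f - diagonal g from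
    (diagonal_sub f g).symm, Matrix.mul_sub, Matrix.sub_mul]

end conjD

lemma unitary_diag {n : ℕ} {W : Matrix (Fin n) (Fin n) ℂ}
    (hW : W ∈ Matrix.unitaryGroup (Fin n) ℂ)
    (hmu : ∃ μ : ℂ, star μ * μ = 1 ∧ μ ∉ spectrum ℂ W) :
    ∃ (u : Matrix.unitaryGroup (Fin n) ℂ) (d : Fin n → ℂ),
      W = conjD u d := by
  classical
  obtain ⟨μ, hμ, hspec⟩ := hmu
  have hμ0 : μ ≠ 0 := by rintro rfl; simp at hμ
  set W₁ : Matrix (Fin n) (Fin n) ℂ := star μ • W with hW₁def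
  have hWst : star W * W = 1 := Matrix.mem_unitaryGroup_iff'.mp hW
  have hWst' : W * star W = 1 := Matrix.mem_unitaryGroup_iff.mp hW
  have h1 : star W₁ * W₁ = 1 := by
    rw [hW₁def, star_smul, star_star, Matrix.smul_mul, Matrix.mul_smul, hWst, smul_smul,
      mul_comm, hμ, one_smul]
  have h2 : W₁ * star W₁ = 1 := by
    rw [hW₁def, star_smul, star_star, Matrix.smul_mul, Matrix.mul_smul, hWst', smul_smul, hμ, one_smul]
  -- 1 - W₁ is a unit
  have hT : IsUnit ((1 : Matrix (Fin n) (Fin n) ℂ) - W₁) := by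
    have hiso : IsUnit (algebraMap ℂ (Matrix (Fin n) (Fin n) ℂ) μ - W) :=
      spectrum.notMem_iff.mp hspec
    have heq : (1 : Matrix (Fin n) (Fin n) ℂ) - W₁ =
        algebraMap ℂ (Matrix (Fin n) (Fin n) ℂ) (star μ) *
          (algebraMap ℂ (Matrix (Fin n) (Fin n) ℂ) μ - W) := by
      rw [mul_sub, ← _root_.map_mul, hμ, _root_.map_one, hW₁def, Algebra.algebraMap_eq_smul_one,
        Matrix.smul_mul, one_mul]
    rw [heq]
    exact (IsUnit.map (algebraMap ℂ (Matrix (Fin n) (Fin n) ℂ))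
      (isUnit_iff_ne_zero.mpr (by simpa using hμ0))).mul hiso
  obtain ⟨t, ht⟩ := hT
  have hcommW : Commute W₁ (t : Matrix (Fin n) (Fin n) ℂ) := by
    rw [ht]; exact (Commute.one_right W₁).sub_right (Commute.refl W₁)
  have hcomm' : Commute W₁ ((t⁻¹ : (Matrix (Fin n) (Fin n) ℂ)ˣ) : Matrix (Fin n) (Fin n) ℂ) :=
    hcommW.units_inv_right
  -- star of t⁻¹
  have hstar_t : star (t : Matrix (Fin n) (Fin n) ℂ) = 1 - star W₁ := by
    rw [ht, star_sub, star_one]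
  have hstar_inv : star ((t⁻¹ : (Matrix (Fin n) (Fin n) ℂ)ˣ) : Matrix (Fin n) (Fin n) ℂ) =
      -(((t⁻¹ : (Matrix (Fin n) (Fin n) ℂ)ˣ) : Matrix (Fin n) (Fin n) ℂ) * W₁) := by
    have hXt : -(((t⁻¹ : (Matrix (Fin n) (Fin n) ℂ)ˣ) : Matrix (Fin n) (Fin n) ℂ) * W₁) *
        star (t : Matrix (Fin n) (Fin n) ℂ) = 1 := by
      rw [hstar_t, neg_mul, mul_sub, mul_one, mul_assoc, h2, mul_one, neg_sub, sub_eq_iff_eq_add]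
      have h3 : ((t⁻¹ : (Matrix (Fin n) (Fin n) ℂ)ˣ) : Matrix (Fin n) (Fin n) ℂ) * (1 - W₁) = 1 := by
        rw [← ht]; exact t.inv_mul
      rw [mul_sub, mul_one] at h3
      linear_combination (norm := noncomm_ring) h3
    have hts : star (t : Matrix (Fin n) (Fin n) ℂ) *
        star ((t⁻¹ : (Matrix (Fin n) (Fin n) ℂ)ˣ) : Matrix (Fin n) (Fin n) ℂ) = 1 := by
      rw [← StarMul.star_mul, t.inv_mul, star_one]
    calc star ((t⁻¹ : (Matrix (Fin n) (Fin n) ℂ)ˣ) : Matrix (Fin n) (Fin n) ℂ)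
        = 1 * star ((t⁻¹ : (Matrix (Fin n) (Fin n) ℂ)ˣ) : Matrix (Fin n) (Fin n) ℂ) := (one_mul _).symm
      _ = -(((t⁻¹ : (Matrix (Fin n) (Fin n) ℂ)ˣ) : Matrix (Fin n) (Fin n) ℂ) * W₁) *
            (star (t : Matrix (Fin n) (Fin n) ℂ) *
             star ((t⁻¹ : (Matrix (Fin n) (Fin n) ℂ)ˣ) : Matrix (Fin n) (Fin n) ℂ)) := by
          rw [← mul_assoc, hXt, one_mul]
      _ = _ := by rw [hts, mul_one]
  -- the Cayley transform
  set H : Matrix (Fin n) (Fin n) ℂ :=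
    Complex.I • ((1 + W₁) * ((t⁻¹ : (Matrix (Fin n) (Fin n) ℂ)ˣ) : Matrix (Fin n) (Fin n) ℂ))
    with hHdef
  have hc : ((t⁻¹ : (Matrix (Fin n) (Fin n) ℂ)ˣ) : Matrix (Fin n) (Fin n) ℂ) * (1 + W₁) =
      (1 + W₁) * ((t⁻¹ : (Matrix (Fin n) (Fin n) ℂ)ˣ) : Matrix (Fin n) (Fin n) ℂ) :=
    (((Commute.one_left _).add_left hcomm')).symm
  have hH : H.IsHermitian := by
    show Hᴴ = H
    rw [← Matrix.star_eq_conjTranspose, hHdef, star_smul, StarMul.star_mul, hstar_inv, star_add,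
      star_one]
    rw [Complex.star_def, Complex.conj_I]
    rw [neg_mul, smul_neg, neg_smul, neg_neg]
    congr 1
    rw [mul_add, mul_one, mul_assoc, h2, mul_one, ← hc, mul_add, mul_one]
    rw [add_comm]
  -- spectral theorem for H
  set u : Matrix.unitaryGroup (Fin n) ℂ := hH.eigenvectorUnitary with hudef
  set r : Fin n → ℝ := hH.eigenvalues with hrdef
  have hHconj : H = conjD u (fun j => (r j : ℂ)) := by
    have := hH.spectral_theorem
    rw [this]
    rfl
  have hden : ∀ j, (r j : ℂ) + Complex.I ≠ 0 := by
    intro j h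
    have := congrArg Complex.im h
    simp at this
  have hHt : H * (t : Matrix (Fin n) (Fin n) ℂ) = Complex.I • (1 + W₁) := by
    rw [hHdef, Matrix.smul_mul, mul_assoc, t.inv_mul, mul_one]
  have hkey1 : (H + Complex.I • 1) * (t : Matrix (Fin n) (Fin n) ℂ) =
      (2 * Complex.I) • (1 : Matrix (Fin n) (Fin n) ℂ) := by
    rw [add_mul, hHt, Matrix.smul_mul, one_mul, ht]
    module
  have hkey2 : (H - Complex.I • 1) * (t : Matrix (Fin n) (Fin n) ℂ) =
      (2 * Complex.I) • W₁ := by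
    rw [sub_mul, hHt, Matrix.smul_mul, one_mul, ht]
    module
  have hHpI : H + Complex.I • 1 = conjD u (fun j => (r j : ℂ) + Complex.I) := by
    rw [conjD_add u (fun j => (r j : ℂ)) (fun _ => Complex.I), conjD_const, ← hHconj]
  have hHmI : H - Complex.I • 1 = conjD u (fun j => (r j : ℂ) - Complex.I) := by
    rw [conjD_sub u (fun j => (r j : ℂ)) (fun _ => Complex.I), conjD_const, ← hHconj]
  set g : Fin n → ℂ := fun j => 2 * Complex.I / ((r j : ℂ) + Complex.I) with hgdef
  have hgmul : conjD u g * (H + Complex.I • 1) = (2 * Complex.I) • 1 := by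
    rw [hHpI, conjD_mul]
    have : (fun j => g j * ((r j : ℂ) + Complex.I)) = fun _ => 2 * Complex.I := by
      funext j
      rw [hgdef]
      exact div_mul_cancel₀ _ (hden j)
    rw [this, conjD_const]
  have h2I : (2 * Complex.I) ≠ 0 := mul_ne_zero two_ne_zero Complex.I_ne_zero
  have hTconj : (t : Matrix (Fin n) (Fin n) ℂ) = conjD u g := by
    have e1 : conjD u g * ((H + Complex.I • 1) * (t : Matrix (Fin n) (Fin n) ℂ)) =
        (2 * Complex.I) • conjD u g := by
      rw [hkey1, Matrix.mul_smul, mul_one]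
    rw [← mul_assoc, hgmul, Matrix.smul_mul, one_mul] at e1
    exact smul_right_injective (Matrix (Fin n) (Fin n) ℂ) h2I e1
  have hW₁conj : W₁ = conjD u (fun j => ((r j : ℂ) - Complex.I) / ((r j : ℂ) + Complex.I)) := by
    apply smul_right_injective (Matrix (Fin n) (Fin n) ℂ) h2I
    show (2 * Complex.I) • W₁ = (2 * Complex.I) • _
    have hfun : (fun j => ((r j : ℂ) - Complex.I) * g j) =
        (fun j => (2 * Complex.I) * (((r j : ℂ) - Complex.I) / ((r j : ℂ) + Complex.I))) := by
      funext j
      rw [hgdef]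
      field_simp
    rw [← hkey2, hHmI, hTconj, conjD_mul, hfun, conjD_smul]
  refine ⟨u, fun j => μ * (((r j : ℂ) - Complex.I) / ((r j : ℂ) + Complex.I)), ?_⟩
  rw [conjD_smul, ← hW₁conj, hW₁def, smul_smul, mul_comm, hμ, one_smul]

lemma trace_set_eq {n : ℕ} {W : Matrix (Fin n) (Fin n) ℂ}
    (u : Matrix.unitaryGroup (Fin n) ℂ) (d : Fin n → ℂ) (hWd : W = conjD u d) :
    {z : ℂ | ∃ ρ : Matrix (Fin n) (Fin n) ℂ, IsDensity ρ ∧ z = (ρ * W).trace} =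
      convexHull ℝ (spectrum ℂ W) := by
  classical
  have hspec : spectrum ℂ W = Set.range d := by
    rw [hWd]
    show spectrum ℂ ((u : Matrix (Fin n) (Fin n) ℂ) * diagonal d * star (u : Matrix (Fin n) (Fin n) ℂ)) = _
    rw [Unitary.spectrum_star_right_conjugate, spectrum_diagonal]
  ext z
  simp only [Set.mem_setOf_eq]
  constructor
  · rintro ⟨ρ, ⟨hpsd, htr⟩, rfl⟩
    set q : Matrix (Fin n) (Fin n) ℂ :=
      star (u : Matrix (Fin n) (Fin n) ℂ) * ρ * (u : Matrix (Fin n) (Fin n) ℂ) with hqdef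
    have hq : q.PosSemidef := by
      have h := hpsd.conjTranspose_mul_mul_same (u : Matrix (Fin n) (Fin n) ℂ)
      rwa [← Matrix.star_eq_conjTranspose] at h
    have hqii : ∀ i, (0 : ℂ) ≤ q i i := by
      intro i
      exact hq.diag_nonneg
    have hqreal : ∀ i, q i i = ((q i i).re : ℂ) := by
      intro i
      have := hqii i
      rw [Complex.le_def] at this
      apply Complex.ext <;> simp [this.2.symm]
    -- trace identity
    have htrace : (ρ * W).trace = (q * diagonal d).trace := by
      rw [hWd]
      show (ρ * ((u : Matrix (Fin n) (Fin n) ℂ) * diagonal d * star (u : Matrix (Fin n) (Fin n) ℂ))).trace = _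
      rw [hqdef]
      rw [show ρ * ((u : Matrix (Fin n) (Fin n) ℂ) * diagonal d * star (u : Matrix (Fin n) (Fin n) ℂ))
          = (ρ * (u : Matrix (Fin n) (Fin n) ℂ) * diagonal d) * star (u : Matrix (Fin n) (Fin n) ℂ) by
        simp only [Matrix.mul_assoc]]
      rw [Matrix.trace_mul_cycle]
      simp only [Matrix.mul_assoc]
    have htq : q.trace = 1 := by
      rw [hqdef, Matrix.trace_mul_cycle, u_mul_star, one_mul, htr]
    set c : Fin n → ℝ := fun i => (q i i).re with hcdef
    have hsum : ∑ i, c i = 1 := by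
      have : (q.trace).re = 1 := by rw [htq]; simp
      rw [Matrix.trace] at this
      rw [← this, hcdef]
      simp [Matrix.diag, Complex.re_sum]
    have hz : (ρ * W).trace = ∑ i, c i • d i := by
      rw [htrace, Matrix.trace]
      apply Finset.sum_congr rfl
      intro i _
      rw [Matrix.diag]
      rw [Matrix.mul_diagonal]
      rw [hqreal i]
      simp [hcdef, Complex.real_smul]
    rw [hz]
    exact mem_convexHull_of_exists_fintype c d (fun i => by
        have h := hqii i; rw [Complex.le_def] at h; simpa [hcdef] using h.1) hsum
      (fun i => by rw [hspec]; exact Set.mem_range_self i) rfl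
  · intro hzmem
    rw [hspec, mem_convexHull_iff_exists_fintype] at hzmem
    obtain ⟨ι, hι, w, zf, hw0, hw1, hzf, hzsum⟩ := hzmem
    choose idx hidx using fun k => hzf k
    set c : Fin n → ℝ := fun i => ∑ k ∈ Finset.univ.filter (fun k => idx k = i), w k with hcdef
    have hc0 : ∀ i, 0 ≤ c i := fun i => Finset.sum_nonneg fun k _ => hw0 k
    have hcsum : ∑ i, c i = 1 := by
      rw [hcdef, ← hw1]
      exact Finset.sum_fiberwise Finset.univ idx w
    refine ⟨conjD u (fun i => (c i : ℂ)), ⟨?_, ?_⟩, ?_⟩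
    · show ((u : Matrix (Fin n) (Fin n) ℂ) * diagonal (fun i => (c i : ℂ)) *
        star (u : Matrix (Fin n) (Fin n) ℂ)).PosSemidef
      rw [Matrix.star_eq_conjTranspose]
      apply Matrix.PosSemidef.mul_mul_conjTranspose_same
      apply Matrix.PosSemidef.diagonal
      intro i
      simpa using Complex.zero_le_real.mpr (hc0 i)
    · show ((u : Matrix (Fin n) (Fin n) ℂ) * diagonal (fun i => (c i : ℂ)) *
        star (u : Matrix (Fin n) (Fin n) ℂ)).trace = 1
      rw [Matrix.trace_mul_cycle, u_star_mul, one_mul, Matrix.trace_diagonal]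
      rw [← Complex.ofReal_sum, hcsum, Complex.ofReal_one]
    · rw [hWd, conjD_mul]
      show z = ((u : Matrix (Fin n) (Fin n) ℂ) * diagonal (fun j => (c j : ℂ) * d j) *
        star (u : Matrix (Fin n) (Fin n) ℂ)).trace
      rw [Matrix.trace_mul_cycle, u_star_mul, one_mul, Matrix.trace_diagonal]
      rw [← hzsum]
      have : ∀ k, w k • zf k = (fun k => (w (k:ι) : ℂ) * d (idx k)) k := by
        intro k
        rw [← hidx k, Complex.real_smul]
      rw [Finset.sum_congr rfl (fun k _ => this k)]
      rw [← Finset.sum_fiberwise Finset.univ idx (fun k => (w k : ℂ) * d (idx k))]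
      apply Finset.sum_congr rfl
      intro i _
      rw [hcdef]
      push_cast
      rw [Finset.sum_mul]
      apply Finset.sum_congr rfl
      intro k hk
      rw [Finset.mem_filter] at hk
      rw [hk.2]


/-- For unitarily implemented channels `Θ_U, Θ_V`, the minimax fidelity
`inf_ρ |Tr(ρ U†V)|` equals the distance from the origin to the convex hull of
the spectrum of `W = U†V`. -/
theorem stmt8 {n : ℕ} (U V : Matrix.unitaryGroup (Fin n) ℂ) :
    sInf {t : ℝ | ∃ ρ : Matrix (Fin n) (Fin n) ℂ, IsDensity ρ ∧
        t = ‖((ρ * ((U : Matrix (Fin n) (Fin n) ℂ)ᴴ * (V : Matrix (Fin n) (Fin n) ℂ))).trace)‖} =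
      Metric.infDist (0 : ℂ)
        (convexHull ℝ (spectrum ℂ ((U : Matrix (Fin n) (Fin n) ℂ)ᴴ * (V : Matrix (Fin n) (Fin n) ℂ)))) := by
  classical
  set W : Matrix (Fin n) (Fin n) ℂ :=
    (U : Matrix (Fin n) (Fin n) ℂ)ᴴ * (V : Matrix (Fin n) (Fin n) ℂ) with hWdef
  have hWmem : W ∈ Matrix.unitaryGroup (Fin n) ℂ := by
    rw [hWdef, ← Matrix.star_eq_conjTranspose]
    exact mul_mem (Unitary.star_mem U.2) V.2
  obtain ⟨u, d, hWd⟩ := unitary_diag hWmem (exists_unimodular_not_mem_spectrum W)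
  have hset := trace_set_eq u d hWd
  have himg : {t : ℝ | ∃ ρ : Matrix (Fin n) (Fin n) ℂ, IsDensity ρ ∧
      t = ‖(ρ * W).trace‖}
      = (fun z : ℂ => ‖z‖) '' (convexHull ℝ (spectrum ℂ W)) := by
    ext x
    constructor
    · rintro ⟨ρ, hρ, rfl⟩
      exact ⟨(ρ * W).trace, hset ▸ ⟨ρ, hρ, rfl⟩, rfl⟩
    · rintro ⟨z, hz, rfl⟩
      rw [← hset] at hz
      obtain ⟨ρ, hρ, rfl⟩ := hz
      exact ⟨ρ, hρ, rfl⟩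
  rw [himg, Set.image_eq_range, Metric.infDist_eq_iInf, iInf]
  congr 1
  apply congrArg
  funext z
  rw [dist_zero_left]
end

section
/- For any completely bounded linear map Λ : B(h) → B(g) between algebras over finite-dimensional Hilbert spaces with dim g = m, the CB norm is attained at matrix level m: ‖Λ‖_cb = ‖Λ ⊗ id_{M_m}‖, where M_m is the algebra of m×m complex matrices. -/
open Matrix
open scoped Matrix.Norms.L2Operator Kronecker

/-- The ℓ²→ℓ² operator norm of a matrix. -/
noncomputable def l2OpNorm {ι : Type*} [Fintype ι] [DecidableEq ι]
    (A : Matrix ι ι ℂ) : ℝ :=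
  ‖Matrix.toEuclideanCLM (𝕜 := ℂ) A‖

/-- The ampliation `Λ ⊗ id_{M_r}` of a map on matrix algebras. -/
noncomputable def tensorId' {n m : ℕ} (r : ℕ)
    (Λ : Matrix (Fin n) (Fin n) ℂ → Matrix (Fin m) (Fin m) ℂ)
    (M : Matrix (Fin n × Fin r) (Fin n × Fin r) ℂ) :
    Matrix (Fin m × Fin r) (Fin m × Fin r) ℂ :=
  fun p q => (Λ (Matrix.of fun i k => M (i, p.2) (k, q.2))) p.1 q.1

/-- The operator norm (w.r.t. ℓ² operator norms) of a map on matrix algebras. -/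
noncomputable def mapOpNorm {α β : Type*} [Fintype α] [DecidableEq α]
    [Fintype β] [DecidableEq β]
    (Λ : Matrix α α ℂ → Matrix β β ℂ) : ℝ :=
  sSup {t : ℝ | ∃ A, l2OpNorm A ≤ 1 ∧ t = l2OpNorm (Λ A)}

/-- The norm of complete boundedness of a map on matrix algebras. -/
noncomputable def cbNorm {n m : ℕ}
    (Λ : Matrix (Fin n) (Fin n) ℂ → Matrix (Fin m) (Fin m) ℂ) : ℝ :=
  sSup {t : ℝ | ∃ r : ℕ, t = mapOpNorm (tensorId' r Λ)}

/-! ### Auxiliary material for the proof -/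

noncomputable section SmithAux

lemma l2OpNorm_eq {ι : Type*} [Fintype ι] [DecidableEq ι] (A : Matrix ι ι ℂ) :
    l2OpNorm A = ‖A‖ := rfl

abbrev eu {ι : Type*} [Fintype ι] (v : ι → ℂ) : EuclideanSpace ℂ ι :=
  (WithLp.equiv 2 (ι → ℂ)).symm v

lemma eu_norm_sq {ι : Type*} [Fintype ι] (v : ι → ℂ) :
    ‖eu v‖ ^ 2 = ∑ i, ‖v i‖ ^ 2 := by
  rw [EuclideanSpace.norm_eq, Real.sq_sqrt] <;> first | rfl | positivity

lemma l2_opNorm_le_of {ι κ : Type*} [Fintype ι] [Fintype κ] [DecidableEq κ]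
    (M : Matrix ι κ ℂ) (c : ℝ) (hc : 0 ≤ c)
    (h : ∀ v : κ → ℂ, ‖eu (M *ᵥ v)‖ ≤ c * ‖eu v‖) : ‖M‖ ≤ c := by
  rw [Matrix.l2_opNorm_def]
  refine ContinuousLinearMap.opNorm_le_bound _ hc fun x => ?_
  exact h ((WithLp.equiv 2 (κ → ℂ)) x)

lemma l2_opNorm_mulVec' {ι κ : Type*} [Fintype ι] [Fintype κ] [DecidableEq κ]
    (M : Matrix ι κ ℂ) (v : κ → ℂ) : ‖eu (M *ᵥ v)‖ ≤ ‖M‖ * ‖eu v‖ :=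
  M.l2_opNorm_mulVec (eu v)

lemma sum_reduce {M : Type*} [AddCommMonoid M] {d m : ℕ} (hd : d ≤ m)
    (f : Fin m → M) (h0 : ∀ k : Fin m, ¬ ((k : ℕ) < d) → f k = 0) :
    ∑ k : Fin m, f k = ∑ j : Fin d, f (Fin.castLEEmb hd j) := by
  rw [← Finset.sum_map Finset.univ (Fin.castLEEmb hd) f]
  refine (Finset.sum_subset (Finset.subset_univ _) fun k _ hk => h0 k fun hlt => hk ?_).symm
  simp only [Finset.mem_map, Finset.mem_univ, Fin.castLEEmb, Function.Embedding.coeFn_mk,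
    true_and]
  exact ⟨⟨(k : ℕ), hlt⟩, by ext; simp⟩

lemma eucl_sum_apply {ι κ : Type*} [Fintype ι] [Fintype κ]
    (w : κ → EuclideanSpace ℂ ι) (s : ι) :
    (∑ k : κ, w k) s = ∑ k : κ, w k s :=
  (congrFun (map_sum (WithLp.linearEquiv 2 ℂ (ι → ℂ)) w Finset.univ) s).trans
    (Finset.sum_apply s Finset.univ _)

section KronNorm

variable {α : Type*} [Fintype α] [DecidableEq α]

lemma kron_one_mulVec {r s : ℕ} (V : Matrix (Fin r) (Fin s) ℂ)
    (x : α × Fin s → ℂ) (i : α) (t : Fin r) :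
    (((1 : Matrix α α ℂ) ⊗ₖ V) *ᵥ x) (i, t) = (V *ᵥ fun k => x (i, k)) t := by
  simp [Matrix.mulVec, dotProduct, Fintype.sum_prod_type, Matrix.one_apply,
    Finset.sum_ite_eq, ite_mul, Finset.mul_sum]

lemma kron_one_norm_le {r s : ℕ} (V : Matrix (Fin r) (Fin s) ℂ) :
    ‖(1 : Matrix α α ℂ) ⊗ₖ V‖ ≤ ‖V‖ := by
  refine l2_opNorm_le_of _ _ (norm_nonneg V) fun x => ?_
  have h1 : ∀ i : α, ‖eu ((fun t => (V *ᵥ fun k => x (i, k)) t))‖ ^ 2 ≤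
      ‖V‖ ^ 2 * ‖eu (fun k => x (i, k))‖ ^ 2 := by
    intro i
    have := l2_opNorm_mulVec' V (fun k => x (i, k))
    calc _ ≤ (‖V‖ * ‖eu fun k => x (i, k)‖) ^ 2 := by
            exact pow_le_pow_left₀ (norm_nonneg _) this 2
      _ = _ := by ring
  have hL : ‖eu (((1 : Matrix α α ℂ) ⊗ₖ V) *ᵥ x)‖ ^ 2 ≤ (‖V‖ * ‖eu x‖) ^ 2 := by
    rw [eu_norm_sq]
    rw [show ((‖V‖ * ‖eu x‖) ^ 2 : ℝ) = ‖V‖ ^ 2 * ‖eu x‖ ^ 2 by ring, eu_norm_sq]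
    calc ∑ p : α × Fin r, ‖(((1 : Matrix α α ℂ) ⊗ₖ V) *ᵥ x) p‖ ^ 2
        = ∑ i : α, ∑ t : Fin r, ‖(V *ᵥ fun k => x (i, k)) t‖ ^ 2 := by
          rw [Fintype.sum_prod_type]
          exact Finset.sum_congr rfl fun i _ => Finset.sum_congr rfl fun t _ => by
            rw [kron_one_mulVec V x i t]
      _ ≤ ∑ i : α, ‖V‖ ^ 2 * ‖eu (fun k => x (i, k))‖ ^ 2 := by
          refine Finset.sum_le_sum fun i _ => ?_
          have := h1 i
          rwa [eu_norm_sq] at this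
      _ = ‖V‖ ^ 2 * ∑ i : α, ∑ k : Fin s, ‖x (i, k)‖ ^ 2 := by
          rw [Finset.mul_sum]; exact Finset.sum_congr rfl fun i _ => by rw [eu_norm_sq]
      _ = ‖V‖ ^ 2 * ∑ p : α × Fin s, ‖x p‖ ^ 2 := by rw [Fintype.sum_prod_type]
  exact (pow_le_pow_iff_left₀ (norm_nonneg _) (by positivity) two_ne_zero).mp hL

end KronNorm

lemma exists_factor {r m : ℕ} (x : Fin m → (Fin r → ℂ)) :
    ∃ (V : Matrix (Fin r) (Fin m) ℂ) (y : Fin m → (Fin m → ℂ)),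
      ‖V‖ ≤ 1 ∧ (∀ i, V *ᵥ y i = x i) ∧ (∀ i, ‖eu (y i)‖ = ‖eu (x i)‖) := by
  classical
  set X : Submodule ℂ (EuclideanSpace ℂ (Fin r)) :=
    Submodule.span ℂ (Set.range fun i => eu (x i)) with hX
  have hd : Module.finrank ℂ X ≤ m := by
    have h1 : Module.finrank ℂ X ≤ (Set.range fun i => eu (x i)).toFinset.card :=
      finrank_span_le_card _
    have h2 : (Set.range fun i => eu (x i)).toFinset.card ≤ m := by
      rw [Set.toFinset_range]
      simpa using Finset.card_image_le (s := Finset.univ) (f := fun i => eu (x i))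
    exact h1.trans h2
  have hmem : ∀ i, eu (x i) ∈ X := fun i => Submodule.subset_span ⟨i, rfl⟩
  let b : OrthonormalBasis (Fin (Module.finrank ℂ X)) ℂ X := stdOrthonormalBasis ℂ X
  set d := Module.finrank ℂ X
  set g : Fin m → EuclideanSpace ℂ (Fin r) :=
    fun k => if h : (k : ℕ) < d then ((b ⟨k, h⟩ : X) : EuclideanSpace ℂ (Fin r)) else 0 with hg
  have hg0 : ∀ k : Fin m, ¬ ((k : ℕ) < d) → g k = 0 := fun k hk => by simp [hg, hk]
  have hgj : ∀ j : Fin d, g (Fin.castLEEmb hd j) = ((b j : X) : EuclideanSpace ℂ (Fin r)) := by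
    intro j
    have hj : ((Fin.castLEEmb hd j : Fin m) : ℕ) < d := j.2
    simp only [hg, dif_pos hj]
    congr 1
  have hortho : Orthonormal ℂ (fun j : Fin d => ((b j : X) : EuclideanSpace ℂ (Fin r))) := by
    constructor
    · intro j
      show ‖((b j : X) : EuclideanSpace ℂ (Fin r))‖ = 1
      rw [Submodule.norm_coe]
      exact b.orthonormal.1 j
    · intro i j hij
      show (inner ℂ ((b i : X) : EuclideanSpace ℂ (Fin r)) ((b j : X) : _) : ℂ) = 0
      rw [← Submodule.coe_inner]
      exact b.orthonormal.2 hij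
  have hVe : ∀ z : Fin m → ℂ,
      eu ((Matrix.of fun s k => g k s) *ᵥ z) = ∑ k : Fin m, z k • g k := by
    intro z
    ext s
    rw [eucl_sum_apply]
    calc ((Matrix.of fun s k => g k s) *ᵥ z) s = ∑ k, g k s * z k := by
          simp [Matrix.mulVec, dotProduct]
      _ = ∑ k, (z k • g k) s := Finset.sum_congr rfl fun k _ => by
          rw [PiLp.smul_apply, smul_eq_mul, mul_comm]
  refine ⟨Matrix.of fun s k => g k s, fun i k => (inner ℂ (g k) (eu (x i)) : ℂ), ?_, ?_, ?_⟩
  · refine l2_opNorm_le_of _ _ zero_le_one fun z => ?_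
    rw [hVe z, one_mul]
    have hred : ∑ k : Fin m, z k • g k
        = ∑ j : Fin d, z (Fin.castLEEmb hd j) • ((b j : X) : EuclideanSpace ℂ (Fin r)) := by
      rw [sum_reduce hd _ (fun k hk => by rw [hg0 k hk, smul_zero])]
      exact Finset.sum_congr rfl fun j _ => by rw [hgj j]
    rw [hred]
    have hnsq : ‖∑ j : Fin d, z (Fin.castLEEmb hd j) • ((b j : X) : EuclideanSpace ℂ (Fin r))‖ ^ 2
        = ∑ j : Fin d, ‖z (Fin.castLEEmb hd j)‖ ^ 2 := by
      have hi := hortho.inner_sum (fun j => z (Fin.castLEEmb hd j))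
        (fun j => z (Fin.castLEEmb hd j)) Finset.univ
      have hn := @inner_self_eq_norm_sq ℂ _ _ _ _
        (∑ j : Fin d, z (Fin.castLEEmb hd j) • ((b j : X) : EuclideanSpace ℂ (Fin r)))
      rw [← hn, hi]
      simp [RCLike.conj_mul]
      norm_cast
    have hle : ∑ j : Fin d, ‖z (Fin.castLEEmb hd j)‖ ^ 2 ≤ ‖eu z‖ ^ 2 := by
      rw [eu_norm_sq]
      rw [← Finset.sum_map Finset.univ (Fin.castLEEmb hd) (fun k => ‖z k‖ ^ 2)]
      exact Finset.sum_le_sum_of_subset_of_nonneg (Finset.subset_univ _)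
        fun k _ _ => by positivity
    have := hnsq.trans_le hle
    exact (pow_le_pow_iff_left₀ (norm_nonneg _) (norm_nonneg _) two_ne_zero).mp this
  · intro i
    set x' : X := ⟨eu (x i), hmem i⟩ with hxdef
    have key : ∑ k : Fin m, (inner ℂ (g k) (eu (x i)) : ℂ) • g k = eu (x i) := by
      rw [sum_reduce hd _ (fun k hk => by rw [hg0 k hk, smul_zero])]
      have : ∀ j : Fin d, (inner ℂ (g (Fin.castLEEmb hd j)) (eu (x i)) : ℂ) • g (Fin.castLEEmb hd j)
          = ((b.repr x' j • b j : X) : EuclideanSpace ℂ (Fin r)) := by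
        intro j
        rw [hgj j, b.repr_apply_apply, Submodule.coe_inner]
        try rfl
      rw [Finset.sum_congr rfl fun j _ => this j]
      rw [← Submodule.coe_sum]
      rw [b.sum_repr x']
    funext s
    exact congrFun (congrArg (WithLp.equiv 2 (Fin r → ℂ)) ((hVe _).trans key)) s
  · intro i
    set x' : X := ⟨eu (x i), hmem i⟩ with hxdef
    have hsq : ‖eu fun k => (inner ℂ (g k) (eu (x i)) : ℂ)‖ ^ 2 = ‖eu (x i)‖ ^ 2 := by
      rw [eu_norm_sq]
      rw [sum_reduce hd (fun k => ‖(inner ℂ (g k) (eu (x i)) : ℂ)‖ ^ 2)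
        (fun k hk => by simp [hg0 k hk])]
      have : ∀ j : Fin d, ‖(inner ℂ (g (Fin.castLEEmb hd j)) (eu (x i)) : ℂ)‖ ^ 2
          = ‖b.repr x' j‖ ^ 2 := by
        intro j
        rw [hgj j, b.repr_apply_apply, Submodule.coe_inner]
        try rfl
      rw [Finset.sum_congr rfl fun j _ => this j]
      have h1 : ∑ j : Fin d, ‖b.repr x' j‖ ^ 2 = ‖b.repr x'‖ ^ 2 := by
        rw [EuclideanSpace.norm_eq, Real.sq_sqrt (by positivity)]
      rw [h1, b.repr.norm_map x']
      rw [show ‖x'‖ = ‖(x' : EuclideanSpace ℂ (Fin r))‖ from (Submodule.norm_coe x').symm]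
    have := congrArg Real.sqrt hsq
    rwa [Real.sqrt_sq (norm_nonneg _), Real.sqrt_sq (norm_nonneg _)] at this

lemma sandwich_block {n r s : ℕ}
    (A : Matrix (Fin n × Fin r) (Fin n × Fin r) ℂ)
    (W V : Matrix (Fin r) (Fin s) ℂ) (k l : Fin s) :
    (Matrix.of fun (i : Fin n) (k' : Fin n) =>
        ((((1 : Matrix (Fin n) (Fin n) ℂ) ⊗ₖ W)ᴴ * A * ((1 : Matrix (Fin n) (Fin n) ℂ) ⊗ₖ V))
          ((i, k)) ((k', l)))) =
      ∑ s' : Fin r, ∑ t : Fin r, ((starRingEnd ℂ) (W s' k) * V t l) •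
        (Matrix.of fun i k' => A (i, s') (k', t)) := by
  ext i k'
  simp only [Matrix.of_apply, Matrix.sum_apply, Matrix.smul_apply, smul_eq_mul,
    Matrix.mul_apply, Matrix.conjTranspose_apply, Matrix.kroneckerMap_apply,
    Fintype.sum_prod_type, Matrix.one_apply, one_mul, apply_ite (star : ℂ → ℂ), star_zero,
    ite_mul, mul_ite, zero_mul, mul_zero, Finset.sum_ite_eq, Finset.sum_ite_eq',
    Finset.mem_univ, if_true, Finset.sum_mul, Finset.mul_sum, Finset.sum_ite_irrel,
    Finset.sum_const_zero]
  rw [Finset.sum_comm]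
  refine Finset.sum_congr rfl fun s' _ => Finset.sum_congr rfl fun t _ => ?_
  rw [RCLike.star_def]
  ring

lemma tensor_module {n m r s : ℕ}
    (Λ : Matrix (Fin n) (Fin n) ℂ →ₗ[ℂ] Matrix (Fin m) (Fin m) ℂ)
    (A : Matrix (Fin n × Fin r) (Fin n × Fin r) ℂ)
    (W V : Matrix (Fin r) (Fin s) ℂ) :
    tensorId' s (⇑Λ)
        ((((1 : Matrix (Fin n) (Fin n) ℂ) ⊗ₖ W)ᴴ) * A * ((1 : Matrix (Fin n) (Fin n) ℂ) ⊗ₖ V)) =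
      (((1 : Matrix (Fin m) (Fin m) ℂ) ⊗ₖ W)ᴴ) * tensorId' r (⇑Λ) A
        * ((1 : Matrix (Fin m) (Fin m) ℂ) ⊗ₖ V) := by
  ext ⟨p, k⟩ ⟨q, l⟩
  have hR : ((((1 : Matrix (Fin m) (Fin m) ℂ) ⊗ₖ W)ᴴ) * tensorId' r (⇑Λ) A
        * ((1 : Matrix (Fin m) (Fin m) ℂ) ⊗ₖ V)) (p, k) (q, l)
      = ∑ s' : Fin r, ∑ t : Fin r, ((starRingEnd ℂ) (W s' k) * V t l) *
          (Λ (Matrix.of fun i k' => A (i, s') (k', t))) p q := by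
    have h := congrFun (congrFun (sandwich_block (tensorId' r (⇑Λ) A) (n := m) W V k l) p) q
    simp only [Matrix.of_apply, Matrix.sum_apply, Matrix.smul_apply, smul_eq_mul] at h
    rw [h]
    rfl
  rw [hR]
  show (Λ (Matrix.of fun i k' =>
      ((((1 : Matrix (Fin n) (Fin n) ℂ) ⊗ₖ W)ᴴ * A * ((1 : Matrix (Fin n) (Fin n) ℂ) ⊗ₖ V))
        ((i, k)) ((k', l))))) p q = _
  rw [sandwich_block A W V k l]
  rw [map_sum]
  simp only [map_sum, _root_.map_smul, Matrix.sum_apply, Matrix.smul_apply, smul_eq_mul]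

/-- `tensorId'` bundled as a linear map. -/
def tensorIdL {n m : ℕ} (r : ℕ)
    (Λ : Matrix (Fin n) (Fin n) ℂ →ₗ[ℂ] Matrix (Fin m) (Fin m) ℂ) :
    Matrix (Fin n × Fin r) (Fin n × Fin r) ℂ →ₗ[ℂ] Matrix (Fin m × Fin r) (Fin m × Fin r) ℂ where
  toFun := tensorId' r ⇑Λ
  map_add' A B := by
    ext ⟨p, k⟩ ⟨q, l⟩
    show (Λ (Matrix.of fun i k' => (A + B) (i, k) (k', l))) p q = _
    rw [show (Matrix.of fun i k' => (A + B) (i, k) (k', l))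
      = (Matrix.of fun i k' => A (i, k) (k', l)) + (Matrix.of fun i k' => B (i, k) (k', l))
      from rfl, map_add]
    rfl
  map_smul' c A := by
    ext ⟨p, k⟩ ⟨q, l⟩
    show (Λ (Matrix.of fun i k' => (c • A) (i, k) (k', l))) p q = _
    rw [show (Matrix.of fun i k' => (c • A) (i, k) (k', l))
      = c • (Matrix.of fun i k' => A (i, k) (k', l)) from rfl, _root_.map_smul]
    rfl

lemma tensorId_zero {n m : ℕ} (r : ℕ)
    (Λ : Matrix (Fin n) (Fin n) ℂ →ₗ[ℂ] Matrix (Fin m) (Fin m) ℂ) :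
    tensorId' r (⇑Λ) 0 = 0 :=
  (tensorIdL r Λ).map_zero

end SmithAux

/-- Smith's theorem: for a linear map `Λ : B(h) → B(g)` with `dim g = m`, the CB
norm is attained at matrix level `m`: `‖Λ‖_cb = ‖Λ ⊗ id_{M_m}‖`. -/
theorem stmt19 {n m : ℕ}
    (Λ : Matrix (Fin n) (Fin n) ℂ →ₗ[ℂ] Matrix (Fin m) (Fin m) ℂ) :
    cbNorm (⇑Λ) = mapOpNorm (tensorId' m (⇑Λ)) := by
  classical
  set S : ℕ → Set ℝ :=
    fun r => {t : ℝ | ∃ A, l2OpNorm A ≤ 1 ∧ t = l2OpNorm (tensorId' r (⇑Λ) A)} with hS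
  have hmap : ∀ r : ℕ, mapOpNorm (tensorId' r (⇑Λ)) = sSup (S r) := fun r => rfl
  have h0 : ∀ r : ℕ, (0 : ℝ) ∈ S r := by
    intro r
    exact ⟨0, by simp [l2OpNorm_eq], by rw [tensorId_zero r Λ]; simp [l2OpNorm_eq]⟩
  have hbdd : ∀ r : ℕ, BddAbove (S r) := by
    intro r
    refine ⟨‖LinearMap.toContinuousLinearMap (tensorIdL r Λ)‖, ?_⟩
    rintro t ⟨A, hA, rfl⟩
    rw [l2OpNorm_eq] at hA ⊢
    calc ‖tensorId' r (⇑Λ) A‖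
        = ‖LinearMap.toContinuousLinearMap (tensorIdL r Λ) A‖ := rfl
      _ ≤ ‖LinearMap.toContinuousLinearMap (tensorIdL r Λ)‖ * ‖A‖ :=
          (LinearMap.toContinuousLinearMap (tensorIdL r Λ)).le_opNorm A
      _ ≤ ‖LinearMap.toContinuousLinearMap (tensorIdL r Λ)‖ * 1 := by
          exact mul_le_mul_of_nonneg_left hA (ContinuousLinearMap.opNorm_nonneg _)
      _ = _ := mul_one _
  have hsup0 : (0 : ℝ) ≤ sSup (S m) := le_csSup (hbdd m) (h0 m)
  -- the key inequality
  have key : ∀ (r : ℕ) (A : Matrix (Fin n × Fin r) (Fin n × Fin r) ℂ),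
      l2OpNorm A ≤ 1 → l2OpNorm (tensorId' r (⇑Λ) A) ≤ sSup (S m) := by
    intro r A hA
    rw [l2OpNorm_eq] at hA ⊢
    refine l2_opNorm_le_of _ _ hsup0 fun ξ => ?_
    obtain ⟨η, hηdef⟩ : ∃ η : Fin m × Fin r → ℂ, η = tensorId' r (⇑Λ) A *ᵥ ξ := ⟨_, rfl⟩
    rw [show tensorId' r (⇑Λ) A *ᵥ ξ = η from hηdef.symm]
    obtain ⟨V, yξ, hV1, hV2, hV3⟩ := exists_factor (fun i s => ξ (i, s))
    obtain ⟨W, yη, hW1, hW2, hW3⟩ := exists_factor (fun i s => η (i, s))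
    set ξ' : Fin m × Fin m → ℂ := fun p => yξ p.1 p.2 with hξ'
    set η' : Fin m × Fin m → ℂ := fun p => yη p.1 p.2 with hη'
    have hξfac : ((1 : Matrix (Fin m) (Fin m) ℂ) ⊗ₖ V) *ᵥ ξ' = ξ := by
      funext p
      obtain ⟨i, s⟩ := p
      rw [kron_one_mulVec]
      exact congrFun (hV2 i) s
    have hηfac : ((1 : Matrix (Fin m) (Fin m) ℂ) ⊗ₖ W) *ᵥ η' = η := by
      funext p
      obtain ⟨i, s⟩ := p
      rw [kron_one_mulVec]
      exact congrFun (hW2 i) s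
    have hprodnorm : ∀ (N : ℕ) (u : Fin m → (Fin N → ℂ)) (w : Fin m → (Fin m → ℂ)),
        (∀ i, ‖eu (w i)‖ = ‖eu (u i)‖) →
        ‖eu (fun p : Fin m × Fin m => w p.1 p.2)‖ = ‖eu (fun p : Fin m × Fin N => u p.1 p.2)‖ := by
      intro N u w h
      have hsq : ‖eu (fun p : Fin m × Fin m => w p.1 p.2)‖ ^ 2
          = ‖eu (fun p : Fin m × Fin N => u p.1 p.2)‖ ^ 2 := by
        rw [eu_norm_sq, eu_norm_sq, Fintype.sum_prod_type, Fintype.sum_prod_type]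
        refine Finset.sum_congr rfl fun i _ => ?_
        have := congrArg (fun a : ℝ => a ^ 2) (h i)
        simp only [eu_norm_sq] at this
        exact this
      have := congrArg Real.sqrt hsq
      rwa [Real.sqrt_sq (norm_nonneg _), Real.sqrt_sq (norm_nonneg _)] at this
    have hnξ : ‖eu ξ'‖ = ‖eu ξ‖ := hprodnorm r (fun i s => ξ (i, s)) yξ hV3
    have hnη : ‖eu η'‖ = ‖eu η‖ := hprodnorm r (fun i s => η (i, s)) yη hW3
    set B : Matrix (Fin n × Fin m) (Fin n × Fin m) ℂ :=
      (((1 : Matrix (Fin n) (Fin n) ℂ) ⊗ₖ W)ᴴ) * A * ((1 : Matrix (Fin n) (Fin n) ℂ) ⊗ₖ V)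
      with hBdef
    have hB : ‖B‖ ≤ 1 := by
      calc ‖B‖ ≤ ‖(((1 : Matrix (Fin n) (Fin n) ℂ) ⊗ₖ W)ᴴ) * A‖
            * ‖(1 : Matrix (Fin n) (Fin n) ℂ) ⊗ₖ V‖ := Matrix.l2_opNorm_mul _ _
        _ ≤ (‖(((1 : Matrix (Fin n) (Fin n) ℂ) ⊗ₖ W)ᴴ)‖ * ‖A‖)
            * ‖(1 : Matrix (Fin n) (Fin n) ℂ) ⊗ₖ V‖ := by
            exact mul_le_mul_of_nonneg_right (Matrix.l2_opNorm_mul _ _) (norm_nonneg _)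
        _ ≤ (1 * 1) * 1 := by
            refine mul_le_mul (mul_le_mul ?_ hA (norm_nonneg _) zero_le_one)
              ((kron_one_norm_le V).trans hV1) (norm_nonneg _) (by norm_num)
            rw [Matrix.l2_opNorm_conjTranspose]
            exact (kron_one_norm_le W).trans hW1
        _ = 1 := by ring
    have hmemB : ‖tensorId' m (⇑Λ) B‖ ∈ S m :=
      ⟨B, by rw [l2OpNorm_eq]; exact hB, by rw [l2OpNorm_eq]⟩
    have hΛB : ‖tensorId' m (⇑Λ) B‖ ≤ sSup (S m) := le_csSup (hbdd m) hmemB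
    -- inner product computation
    have hdot : star η ⬝ᵥ η = star η' ⬝ᵥ ((tensorId' m (⇑Λ) B) *ᵥ ξ') := by
      calc star η ⬝ᵥ η
          = star (((1 : Matrix (Fin m) (Fin m) ℂ) ⊗ₖ W) *ᵥ η') ⬝ᵥ
            (tensorId' r (⇑Λ) A *ᵥ (((1 : Matrix (Fin m) (Fin m) ℂ) ⊗ₖ V) *ᵥ ξ')) := by
            rw [hηfac, hξfac, ← hηdef]
        _ = (star η' ᵥ* ((1 : Matrix (Fin m) (Fin m) ℂ) ⊗ₖ W)ᴴ) ⬝ᵥ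
            ((tensorId' r (⇑Λ) A * ((1 : Matrix (Fin m) (Fin m) ℂ) ⊗ₖ V)) *ᵥ ξ') := by
            rw [star_mulVec, Matrix.mulVec_mulVec]
        _ = star η' ⬝ᵥ ((((1 : Matrix (Fin m) (Fin m) ℂ) ⊗ₖ W)ᴴ) *ᵥ
            ((tensorId' r (⇑Λ) A * ((1 : Matrix (Fin m) (Fin m) ℂ) ⊗ₖ V)) *ᵥ ξ')) :=
            (dotProduct_mulVec _ _ _).symm
        _ = star η' ⬝ᵥ (((((1 : Matrix (Fin m) (Fin m) ℂ) ⊗ₖ W)ᴴ) *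
            (tensorId' r (⇑Λ) A * ((1 : Matrix (Fin m) (Fin m) ℂ) ⊗ₖ V))) *ᵥ ξ') := by
            rw [Matrix.mulVec_mulVec]
        _ = star η' ⬝ᵥ ((tensorId' m (⇑Λ) B) *ᵥ ξ') := by
            rw [hBdef, tensor_module Λ A W V, Matrix.mul_assoc]
    have h1 : ‖eu η‖ * ‖eu η‖ = RCLike.re (star η ⬝ᵥ η) := by
      rw [dotProduct_comm, ← EuclideanSpace.inner_toLp_toLp]
      exact (inner_self_eq_norm_mul_norm (𝕜 := ℂ) (eu η)).symm
    have h2 : RCLike.re (star η' ⬝ᵥ ((tensorId' m (⇑Λ) B) *ᵥ ξ'))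
        ≤ ‖eu η‖ * (‖tensorId' m (⇑Λ) B‖ * ‖eu ξ‖) := by
      calc RCLike.re (star η' ⬝ᵥ ((tensorId' m (⇑Λ) B) *ᵥ ξ'))
          ≤ ‖(star η' ⬝ᵥ ((tensorId' m (⇑Λ) B) *ᵥ ξ') : ℂ)‖ := RCLike.re_le_norm _
        _ = ‖(inner ℂ (eu η') (eu ((tensorId' m (⇑Λ) B) *ᵥ ξ')) : ℂ)‖ := by
            rw [dotProduct_comm]; rfl
        _ ≤ ‖eu η'‖ * ‖eu ((tensorId' m (⇑Λ) B) *ᵥ ξ')‖ := norm_inner_le_norm _ _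
        _ ≤ ‖eu η'‖ * (‖tensorId' m (⇑Λ) B‖ * ‖eu ξ'‖) := by
            exact mul_le_mul_of_nonneg_left (l2_opNorm_mulVec' _ _) (norm_nonneg _)
        _ = ‖eu η‖ * (‖tensorId' m (⇑Λ) B‖ * ‖eu ξ‖) := by rw [hnη, hnξ]
    have hmain : ‖eu η‖ * ‖eu η‖ ≤ ‖eu η‖ * (‖tensorId' m (⇑Λ) B‖ * ‖eu ξ‖) := by
      rw [h1, hdot]; exact h2
    have hfinal : ‖eu η‖ ≤ sSup (S m) * ‖eu ξ‖ := by
      rcases eq_or_lt_of_le (norm_nonneg (eu η)) with hz | hz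
      · rw [← hz]
        exact mul_nonneg hsup0 (norm_nonneg _)
      · have h3 : ‖eu η‖ ≤ ‖tensorId' m (⇑Λ) B‖ * ‖eu ξ‖ :=
          le_of_mul_le_mul_left hmain hz
        exact h3.trans (mul_le_mul_of_nonneg_right hΛB (norm_nonneg _))
    exact hfinal
  -- assemble
  have hr_le : ∀ r : ℕ, sSup (S r) ≤ sSup (S m) := by
    intro r
    refine csSup_le ⟨0, h0 r⟩ ?_
    rintro t ⟨A, hA, rfl⟩
    exact key r A hA
  rw [show cbNorm (⇑Λ) = sSup {t : ℝ | ∃ r : ℕ, t = mapOpNorm (tensorId' r (⇑Λ))} from rfl]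
  refine le_antisymm ?_ ?_
  · refine csSup_le ⟨mapOpNorm (tensorId' m (⇑Λ)), ⟨m, rfl⟩⟩ ?_
    rintro t ⟨r, rfl⟩
    rw [hmap r, hmap m]
    exact hr_le r
  · refine le_csSup ⟨mapOpNorm (tensorId' m (⇑Λ)), ?_⟩ ⟨m, rfl⟩
    rintro t ⟨r, rfl⟩
    rw [hmap r, hmap m]
    exact hr_le r
end
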